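/- There exist constants c₂ > c₁ > 0 such that for all sufficiently large integers ℓ, the sum S̃_ℓ = Σ over positive integers a,b,c with a+b+c=ℓ of [(3/4)/((a+b)²(b+c)²) + (3/2)/((a+b)(b+c)(a+c)²)] satisfies c₁·(log ℓ)/ℓ² ≤ S̃_ℓ ≤ c₂·(log ℓ)/ℓ². -/

import Mathlib

open Finset

/-- The top-cell contribution `S̃_ℓ` to the discrete integral of `(B^comb_{1,1})²`:
the sum over positive integers `a,b,c` with `a+b+c = ℓ` of
`(3/4)/((a+b)²(b+c)²) + (3/2)/((a+b)(b+c)(a+c)²)`. -/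
noncomputable def Stilde (l : ℕ) : ℝ :=
  ∑ x ∈ (Finset.Icc 1 l ×ˢ Finset.Icc 1 l ×ˢ Finset.Icc 1 l).filter
      (fun x : ℕ × ℕ × ℕ => x.1 + x.2.1 + x.2.2 = l),
    (((3 : ℝ)/4) / (((x.1 + x.2.1 : ℕ) : ℝ) ^ 2 * ((x.2.1 + x.2.2 : ℕ) : ℝ) ^ 2)
      + ((3 : ℝ)/2) / (((x.1 + x.2.1 : ℕ) : ℝ) * ((x.2.1 + x.2.2 : ℕ) : ℝ)
          * ((x.1 + x.2.2 : ℕ) : ℝ) ^ 2))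

def Sset (l : ℕ) : Finset (ℕ × ℕ × ℕ) :=
  (Finset.Icc 1 l ×ˢ Finset.Icc 1 l ×ˢ Finset.Icc 1 l).filter
      (fun x : ℕ × ℕ × ℕ => x.1 + x.2.1 + x.2.2 = l)

lemma Stilde_eq (l : ℕ) : Stilde l = ∑ x ∈ Sset l,
    (((3 : ℝ)/4) / (((x.1 + x.2.1 : ℕ) : ℝ) ^ 2 * ((x.2.1 + x.2.2 : ℕ) : ℝ) ^ 2)
      + ((3 : ℝ)/2) / (((x.1 + x.2.1 : ℕ) : ℝ) * ((x.2.1 + x.2.2 : ℕ) : ℝ)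
          * ((x.1 + x.2.2 : ℕ) : ℝ) ^ 2)) := rfl

lemma mem_Sset {l : ℕ} {x : ℕ × ℕ × ℕ} :
    x ∈ Sset l ↔ (1 ≤ x.1 ∧ 1 ≤ x.2.1 ∧ 1 ≤ x.2.2 ∧ x.1 + x.2.1 + x.2.2 = l) := by
  simp only [Sset, Finset.mem_filter, Finset.mem_product, Finset.mem_Icc]
  omega

lemma harm_upper : ∀ n : ℕ, ∑ m ∈ Finset.Icc 2 n, (1:ℝ)/m ≤ Real.log n := by
  intro n
  induction n with
  | zero => simp
  | succ k ih =>
    rcases le_or_gt (k+1) 1 with h | h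
    · have : k = 0 := by omega
      subst this; simp
    · rw [Finset.sum_Icc_succ_top (by omega)]
      have hk1 : (1:ℝ) ≤ k := by
        have : 1 ≤ k := by omega
        exact_mod_cast this
      have key : (1:ℝ)/(k+1) ≤ Real.log (k+1) - Real.log k := by
        have hlog : Real.log ((k:ℝ)/(k+1)) ≤ (k:ℝ)/(k+1) - 1 :=
          Real.log_le_sub_one_of_pos (by positivity)
        rw [Real.log_div (by linarith) (by positivity)] at hlog
        have heq : (k:ℝ)/(k+1) - 1 = -(1/(k+1)) := by field_simp; ring
        linarith
      push_cast
      linarith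

lemma harm_lower : ∀ n : ℕ, Real.log (n+1) - Real.log 2 ≤ ∑ m ∈ Finset.Icc 2 n, (1:ℝ)/m := by
  intro n
  induction n with
  | zero => simpa using Real.log_nonneg (by norm_num : (1:ℝ) ≤ 2)
           
  | succ k ih =>
    rcases le_or_gt (k+1) 1 with h | h
    · have : k = 0 := by omega
      subst this; norm_num
    · rw [Finset.sum_Icc_succ_top (by omega)]
      have key : Real.log (k+1+1) - Real.log (k+1) ≤ (1:ℝ)/(k+1) := by
        have hlog : Real.log (((k:ℝ)+2)/(k+1)) ≤ ((k:ℝ)+2)/(k+1) - 1 :=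
          Real.log_le_sub_one_of_pos (by positivity)
        rw [Real.log_div (by positivity) (by positivity)] at hlog
        have heq : ((k:ℝ)+2)/(k+1) - 1 = 1/(k+1) := by field_simp; ring
        have h2 : Real.log ((k:ℝ)+1+1) = Real.log ((k:ℝ)+2) := by ring_nf
        linarith
      push_cast
      linarith

lemma pointwise_bound (p q r L : ℝ) (hp : 0 < p) (hq : 0 < q) (hr : 0 < r)
    (hL : 0 < L) (hpq : L ≤ p + q) (hqr : L ≤ q + r) (hpr : L ≤ p + r) :
    3/4/(p^2*q^2) + 3/2/(p*q*r^2) ≤ 9/L^2 * (1/p^2 + 1/q^2 + 1/r^2) := by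
  have hp2 : (0:ℝ) < p^2 := by positivity
  have hq2 : (0:ℝ) < q^2 := by positivity
  have hr2 : (0:ℝ) < r^2 := by positivity
  have hL2 : (0:ℝ) < L^2 := by positivity
  have a1 : (0:ℝ) ≤ 1/p^2 := by positivity
  have a2 : (0:ℝ) ≤ 1/q^2 := by positivity
  have a3 : (0:ℝ) ≤ 1/r^2 := by positivity
  have h3L : (0:ℝ) ≤ 3/L^2 := by positivity
  have h6L : (0:ℝ) ≤ 6/L^2 := by positivity
  -- part 1
  have part1 : 3/4/(p^2*q^2) ≤ 3/L^2 * (1/p^2 + 1/q^2) := by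
    rcases le_total p q with hle | hle
    · have h1 : 1/q^2 ≤ 4/L^2 := by
        rw [div_le_div_iff₀ hq2 hL2]; nlinarith
      have step : 3/4/(p^2*q^2) ≤ 3/L^2 * (1/p^2) := by
        calc 3/4/(p^2*q^2) = 3/4 * (1/p^2) * (1/q^2) := by ring
          _ ≤ 3/4 * (1/p^2) * (4/L^2) := by gcongr
          _ = 3/L^2 * (1/p^2) := by ring
      have := mul_le_mul_of_nonneg_left (show (1:ℝ)/p^2 ≤ 1/p^2+1/q^2 by linarith) h3L
      linarith
    · have h1 : 1/p^2 ≤ 4/L^2 := by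
        rw [div_le_div_iff₀ hp2 hL2]; nlinarith
      have step : 3/4/(p^2*q^2) ≤ 3/L^2 * (1/q^2) := by
        calc 3/4/(p^2*q^2) = 3/4 * (1/q^2) * (1/p^2) := by ring
          _ ≤ 3/4 * (1/q^2) * (4/L^2) := by gcongr
          _ = 3/L^2 * (1/q^2) := by ring
      have := mul_le_mul_of_nonneg_left (show (1:ℝ)/q^2 ≤ 1/p^2+1/q^2 by linarith) h3L
      linarith
  have part2 : 3/2/(p*q*r^2) ≤ 6/L^2 * (1/p^2 + 1/q^2 + 1/r^2) := by
    rcases le_or_gt (L/2) r with hr' | hr'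
    · have h1 : 1/r^2 ≤ 4/L^2 := by
        rw [div_le_div_iff₀ hr2 hL2]; nlinarith
      have h2 : 1/(p*q) ≤ 1/2 * (1/p^2 + 1/q^2) := by
        have hs := sq_nonneg (1/p - 1/q)
        have e1 : 1/(p*q) = (1/p) * (1/q) := by ring
        have e2 : 1/p^2 = (1/p)^2 := by ring
        have e3 : 1/q^2 = (1/q)^2 := by ring
        rw [e1, e2, e3]; nlinarith
      have hpq0 : (0:ℝ) < p*q := by positivity
      have hinvpq : (0:ℝ) ≤ 1/(p*q) := by positivity
      have step : 3/2/(p*q*r^2) ≤ 6/L^2 * (1/(p*q)) := by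
        calc 3/2/(p*q*r^2) = 3/2 * (1/(p*q)) * (1/r^2) := by ring
          _ ≤ 3/2 * (1/(p*q)) * (4/L^2) := by gcongr
          _ = 6/L^2 * (1/(p*q)) := by ring
      have h4 := mul_le_mul_of_nonneg_left h2 h6L
      have h5 := mul_le_mul_of_nonneg_left
        (show 1/2 * ((1:ℝ)/p^2 + 1/q^2) ≤ 1/p^2 + 1/q^2 + 1/r^2 by linarith) h6L
      linarith
    · have hp' : L/2 ≤ p := by linarith
      have hq' : L/2 ≤ q := by linarith
      have h1 : 1/p ≤ 2/L := by
        rw [div_le_div_iff₀ hp hL]; linarith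
      have h2 : 1/q ≤ 2/L := by
        rw [div_le_div_iff₀ hq hL]; linarith
      have b1 : (0:ℝ) ≤ 1/q := by positivity
      have b3 : (0:ℝ) ≤ 2/L := by positivity
      have step : 3/2/(p*q*r^2) ≤ 6/L^2 * (1/r^2) := by
        calc 3/2/(p*q*r^2) = 3/2 * (1/p) * (1/q) * (1/r^2) := by ring
          _ ≤ 3/2 * (2/L) * (2/L) * (1/r^2) := by gcongr
          _ = 6/L^2 * (1/r^2) := by ring
      have := mul_le_mul_of_nonneg_left
        (show (1:ℝ)/r^2 ≤ 1/p^2 + 1/q^2 + 1/r^2 by linarith) h6L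
      linarith
  have hfin := mul_le_mul_of_nonneg_left
    (show (1:ℝ)/p^2 + 1/q^2 ≤ 1/p^2 + 1/q^2 + 1/r^2 by linarith) h3L
  have hsplit : (9:ℝ)/L^2 * (1/p^2 + 1/q^2 + 1/r^2)
      = 3/L^2 * (1/p^2 + 1/q^2 + 1/r^2) + 6/L^2 * (1/p^2 + 1/q^2 + 1/r^2) := by ring
  linarith

lemma sum_inv_sq_le (l : ℕ) (g h : ℕ × ℕ × ℕ → ℕ)
    (hg : ∀ x ∈ Sset l, 2 ≤ g x ∧ g x ≤ l ∧ 1 ≤ h x ∧ h x < g x)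
    (hinj : ∀ x ∈ Sset l, ∀ y ∈ Sset l, g x = g y → h x = h y → x = y) :
    ∑ x ∈ Sset l, (1:ℝ)/((g x : ℕ) : ℝ)^2 ≤ Real.log l := by
  have hmaps : ∀ x ∈ Sset l, g x ∈ Finset.Icc 2 l := fun x hx => by
    rcases hg x hx with ⟨h1, h2, _⟩; simp [Finset.mem_Icc]; omega
  rw [← Finset.sum_fiberwise_of_maps_to hmaps]
  have step : ∀ p ∈ Finset.Icc 2 l,
      ∑ x ∈ (Sset l).filter (fun x => g x = p), (1:ℝ)/((g x : ℕ) : ℝ)^2 ≤ (1:ℝ)/p := by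
    intro p hp
    simp only [Finset.mem_Icc] at hp
    have hcard : ((Sset l).filter (fun x => g x = p)).card ≤ p - 1 := by
      have := Finset.card_le_card_of_injOn h
        (s := (Sset l).filter (fun x => g x = p)) (t := Finset.Ico 1 p)
        (fun x hx => by
          obtain ⟨hx1, hx2⟩ := Finset.mem_filter.mp hx
          rcases hg x hx1 with ⟨_, _, h3, h4⟩
          simp only [Finset.mem_coe, Finset.mem_Ico]; omega)
        (fun x hx y hy hxy => by
          obtain ⟨hx1, hx2⟩ := Finset.mem_filter.mp (Finset.mem_coe.mp hx)
          obtain ⟨hy1, hy2⟩ := Finset.mem_filter.mp (Finset.mem_coe.mp hy)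
          exact hinj x hx1 y hy1 (hx2.trans hy2.symm) hxy)
      simpa [Nat.card_Ico] using this
    calc ∑ x ∈ (Sset l).filter (fun x => g x = p), (1:ℝ)/((g x : ℕ) : ℝ)^2
        = ∑ x ∈ (Sset l).filter (fun x => g x = p), (1:ℝ)/(p:ℝ)^2 := by
          apply Finset.sum_congr rfl
          intro x hx
          simp only [Finset.mem_filter] at hx
          rw [hx.2]
      _ = (((Sset l).filter (fun x => g x = p)).card : ℝ) * (1/(p:ℝ)^2) := by
          rw [Finset.sum_const, nsmul_eq_mul]
      _ ≤ (p : ℝ) * (1/(p:ℝ)^2) := by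
          have : (((Sset l).filter (fun x => g x = p)).card : ℝ) ≤ (p:ℝ) := by
            have : ((Sset l).filter (fun x => g x = p)).card ≤ p := by omega
            exact_mod_cast this
          have hp2 : (0:ℝ) ≤ 1/(p:ℝ)^2 := by positivity
          exact mul_le_mul_of_nonneg_right this hp2
      _ = 1/(p:ℝ) := by
          have hp0 : (p:ℝ) ≠ 0 := by
            have : 0 < p := by omega
            exact_mod_cast this.ne'
          field_simp
  calc ∑ p ∈ Finset.Icc 2 l, ∑ x ∈ (Sset l).filter (fun x => g x = p), (1:ℝ)/((g x : ℕ) : ℝ)^2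
      ≤ ∑ p ∈ Finset.Icc 2 l, (1:ℝ)/p := Finset.sum_le_sum step
    _ ≤ Real.log l := harm_upper l

lemma Stilde_upper (l : ℕ) (hl : 2 ≤ l) : Stilde l ≤ 27 * Real.log l / (l:ℝ)^2 := by
  have hgcond : ∀ (g h : ℕ × ℕ × ℕ → ℕ),
      (∀ x, 1 ≤ x.1 → 1 ≤ x.2.1 → 1 ≤ x.2.2 → x.1 + x.2.1 + x.2.2 = l →
        2 ≤ g x ∧ g x ≤ l ∧ 1 ≤ h x ∧ h x < g x) →
      ∀ x ∈ Sset l, 2 ≤ g x ∧ g x ≤ l ∧ 1 ≤ h x ∧ h x < g x := by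
    intro g h hcond x hx
    rw [mem_Sset] at hx
    exact hcond x hx.1 hx.2.1 hx.2.2.1 hx.2.2.2
  have h1 : ∑ x ∈ Sset l, (1:ℝ)/((x.1 + x.2.1 : ℕ) : ℝ)^2 ≤ Real.log l := by
    apply sum_inv_sq_le l (fun x => x.1 + x.2.1) (fun x => x.1)
    · exact hgcond _ _ (fun x h1 h2 h3 h4 => by omega)
    · intro x hx y hy hg hh
      rw [mem_Sset] at hx hy
      obtain ⟨a, b, c⟩ := x; obtain ⟨a', b', c'⟩ := y
      simp only [Prod.mk.injEq] at *
      omega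
  have h2 : ∑ x ∈ Sset l, (1:ℝ)/((x.2.1 + x.2.2 : ℕ) : ℝ)^2 ≤ Real.log l := by
    apply sum_inv_sq_le l (fun x => x.2.1 + x.2.2) (fun x => x.2.1)
    · exact hgcond _ _ (fun x h1 h2 h3 h4 => by omega)
    · intro x hx y hy hg hh
      rw [mem_Sset] at hx hy
      obtain ⟨a, b, c⟩ := x; obtain ⟨a', b', c'⟩ := y
      simp only [Prod.mk.injEq] at *
      omega
  have h3 : ∑ x ∈ Sset l, (1:ℝ)/((x.1 + x.2.2 : ℕ) : ℝ)^2 ≤ Real.log l := by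
    apply sum_inv_sq_le l (fun x => x.1 + x.2.2) (fun x => x.1)
    · exact hgcond _ _ (fun x h1 h2 h3 h4 => by omega)
    · intro x hx y hy hg hh
      rw [mem_Sset] at hx hy
      obtain ⟨a, b, c⟩ := x; obtain ⟨a', b', c'⟩ := y
      simp only [Prod.mk.injEq] at *
      omega
  have hL : (0:ℝ) < l := by
    have : 0 < l := by omega
    exact_mod_cast this
  have key : ∀ x ∈ Sset l,
      (((3 : ℝ)/4) / (((x.1 + x.2.1 : ℕ) : ℝ) ^ 2 * ((x.2.1 + x.2.2 : ℕ) : ℝ) ^ 2)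
      + ((3 : ℝ)/2) / (((x.1 + x.2.1 : ℕ) : ℝ) * ((x.2.1 + x.2.2 : ℕ) : ℝ)
          * ((x.1 + x.2.2 : ℕ) : ℝ) ^ 2))
      ≤ 9/(l:ℝ)^2 * (1/((x.1 + x.2.1 : ℕ) : ℝ)^2 + 1/((x.2.1 + x.2.2 : ℕ) : ℝ)^2
          + 1/((x.1 + x.2.2 : ℕ) : ℝ)^2) := by
    intro x hx
    rw [mem_Sset] at hx
    apply pointwise_bound
    · exact_mod_cast (show 0 < x.1 + x.2.1 by omega)
    · exact_mod_cast (show 0 < x.2.1 + x.2.2 by omega)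
    · exact_mod_cast (show 0 < x.1 + x.2.2 by omega)
    · exact hL
    · exact_mod_cast (show l ≤ (x.1 + x.2.1) + (x.2.1 + x.2.2) by omega)
    · exact_mod_cast (show l ≤ (x.2.1 + x.2.2) + (x.1 + x.2.2) by omega)
    · exact_mod_cast (show l ≤ (x.1 + x.2.1) + (x.1 + x.2.2) by omega)
  calc Stilde l ≤ ∑ x ∈ Sset l, 9/(l:ℝ)^2 * (1/((x.1 + x.2.1 : ℕ) : ℝ)^2
          + 1/((x.2.1 + x.2.2 : ℕ) : ℝ)^2 + 1/((x.1 + x.2.2 : ℕ) : ℝ)^2) := by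
        rw [Stilde_eq]; exact Finset.sum_le_sum key
    _ = 9/(l:ℝ)^2 * ((∑ x ∈ Sset l, (1:ℝ)/((x.1 + x.2.1 : ℕ) : ℝ)^2)
          + (∑ x ∈ Sset l, (1:ℝ)/((x.2.1 + x.2.2 : ℕ) : ℝ)^2)
          + (∑ x ∈ Sset l, (1:ℝ)/((x.1 + x.2.2 : ℕ) : ℝ)^2)) := by
        rw [← Finset.sum_add_distrib, ← Finset.sum_add_distrib, Finset.mul_sum]
    _ ≤ 9/(l:ℝ)^2 * (Real.log l + Real.log l + Real.log l) := by
        have h9 : (0:ℝ) ≤ 9/(l:ℝ)^2 := by positivity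
        exact mul_le_mul_of_nonneg_left (by linarith) h9
    _ = 27 * Real.log l / (l:ℝ)^2 := by ring

lemma Stilde_lower (l : ℕ) (hl : 16 ≤ l) : 3/16 * Real.log l / (l:ℝ)^2 ≤ Stilde l := by
  set F : ℕ × ℕ × ℕ → ℝ := fun x =>
    (((3 : ℝ)/4) / (((x.1 + x.2.1 : ℕ) : ℝ) ^ 2 * ((x.2.1 + x.2.2 : ℕ) : ℝ) ^ 2)
      + ((3 : ℝ)/2) / (((x.1 + x.2.1 : ℕ) : ℝ) * ((x.2.1 + x.2.2 : ℕ) : ℝ)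
          * ((x.1 + x.2.2 : ℕ) : ℝ) ^ 2)) with hF
  have hStilde : Stilde l = ∑ x ∈ Sset l, F x := rfl
  have hFnn : ∀ x, 0 ≤ F x := by
    intro x
    rw [hF]
    positivity
  set M := l / 2 with hM
  set T : Finset (ℕ × ℕ) := (Finset.Icc 2 M ×ˢ Finset.Icc 1 l).filter
    (fun y : ℕ × ℕ => y.2 < y.1) with hT
  have memT : ∀ {y : ℕ × ℕ}, y ∈ T ↔ (2 ≤ y.1 ∧ y.1 ≤ M ∧ 1 ≤ y.2 ∧ y.2 ≤ l ∧ y.2 < y.1) := by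
    intro y
    simp only [hT, Finset.mem_filter, Finset.mem_product, Finset.mem_Icc]
    omega
  set e : ℕ × ℕ → ℕ × ℕ × ℕ := fun y => (y.2, y.1 - y.2, l - y.1) with he
  -- Step A : sum over T of F ∘ e  ≤ Stilde l
  have stepA : ∑ y ∈ T, F (e y) ≤ Stilde l := by
    have hinj : ∀ x ∈ T, ∀ y ∈ T, e x = e y → x = y := by
      intro x hx y hy hxy
      rw [memT] at hx hy
      obtain ⟨m, a⟩ := x; obtain ⟨m', a'⟩ := y
      simp only [he, Prod.mk.injEq] at *
      omega
    rw [← Finset.sum_image hinj, hStilde]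
    apply Finset.sum_le_sum_of_subset_of_nonneg
    · intro x hx
      obtain ⟨y, hy, rfl⟩ := Finset.mem_image.mp hx
      rw [memT] at hy
      rw [mem_Sset]
      simp only [he]
      omega
    · intro x _ _
      exact hFnn x
  -- Step B : pointwise lower bound on F (e y)
  have stepB : ∀ y ∈ T, (3:ℝ)/4 * (1/((y.1:ℝ)^2 * (l:ℝ)^2)) ≤ F (e y) := by
    intro y hy
    rw [memT] at hy
    simp only [hF]
    refine le_trans ?_ (le_add_of_nonneg_right (by positivity))
    have c1 : ((e y).1 + (e y).2.1 : ℕ) = y.1 := by simp only [he]; omega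
    have c2 : ((e y).2.1 + (e y).2.2 : ℕ) = l - y.2 := by simp only [he]; omega
    rw [c1, c2]
    have hlm : ((l - y.2 : ℕ) : ℝ) ≤ (l : ℝ) := by
      exact_mod_cast (show l - y.2 ≤ l by omega)
    have hlm0 : (0:ℝ) < ((l - y.2 : ℕ) : ℝ) := by
      exact_mod_cast (show 0 < l - y.2 by omega)
    have hy10 : (0:ℝ) < (y.1:ℝ) := by
      exact_mod_cast (show 0 < y.1 by omega)
    have hl0 : (0:ℝ) < (l:ℝ) := by
      exact_mod_cast (show 0 < l by omega)
    have h1 : (3:ℝ)/4 * (1/((y.1:ℝ)^2 * (l:ℝ)^2)) = 3/4 / ((y.1:ℝ)^2 * (l:ℝ)^2) := by ring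
    rw [h1]
    gcongr
  -- Step C : the sum over T of the lower bounds
  have stepC : ∑ y ∈ T, (3:ℝ)/4 * (1/((y.1:ℝ)^2 * (l:ℝ)^2))
      = ∑ m ∈ Finset.Icc 2 M, ((m - 1 : ℕ) : ℝ) * ((3:ℝ)/4 * (1/((m:ℝ)^2 * (l:ℝ)^2))) := by
    rw [hT, Finset.sum_filter, Finset.sum_product]
    apply Finset.sum_congr rfl
    intro m hm
    rw [Finset.mem_Icc] at hm
    have hfilter : (Finset.Icc 1 l).filter (fun a => a < m) = Finset.Ico 1 m := by
      ext a
      simp only [Finset.mem_filter, Finset.mem_Icc, Finset.mem_Ico]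
      omega
    rw [← Finset.sum_filter, hfilter]
    dsimp only
    rw [Finset.sum_const, Nat.card_Ico, nsmul_eq_mul]
  -- Step D : pointwise bound of the terms by 3/8 / (m l²)
  have stepD : ∀ m ∈ Finset.Icc 2 M,
      (3:ℝ)/8 * (1/(m:ℝ)) * (1/(l:ℝ)^2) ≤ ((m - 1 : ℕ) : ℝ) * ((3:ℝ)/4 * (1/((m:ℝ)^2 * (l:ℝ)^2))) := by
    intro m hm
    rw [Finset.mem_Icc] at hm
    have hm2 : (2:ℝ) ≤ (m:ℝ) := by exact_mod_cast hm.1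
    have hc : ((m - 1 : ℕ) : ℝ) = (m:ℝ) - 1 := by
      have : 1 ≤ m := by omega
      push_cast [this]
      ring
    have hl0 : (0:ℝ) < (l:ℝ) := by
      exact_mod_cast (show 0 < l by omega)
    rw [hc]
    have e1 : (3:ℝ)/8 * (1/(m:ℝ)) * (1/(l:ℝ)^2) = 3/(8*(m:ℝ)*(l:ℝ)^2) := by ring
    have e2 : ((m:ℝ) - 1) * ((3:ℝ)/4 * (1/((m:ℝ)^2 * (l:ℝ)^2)))
        = (3*((m:ℝ)-1))/(4*(m:ℝ)^2*(l:ℝ)^2) := by ring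
    rw [e1, e2, div_le_div_iff₀ (by positivity) (by positivity)]
    nlinarith [mul_nonneg (mul_nonneg (show (0:ℝ) ≤ (m:ℝ)-2 by linarith)
      (show (0:ℝ) ≤ (m:ℝ) by linarith)) (sq_nonneg (l:ℝ))]
  -- Step E : harmonic sum lower bound
  have hM2 : 2 ≤ M := by omega
  have hMl : M ≤ l := by omega
  have hl0 : (0:ℝ) < (l:ℝ) := by exact_mod_cast (show 0 < l by omega)
  have stepE : (1:ℝ)/2 * Real.log l ≤ ∑ m ∈ Finset.Icc 2 M, (1:ℝ)/m := by
    have h1 := harm_lower M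
    have h2 : (l:ℝ)/2 ≤ (M:ℝ) + 1 := by
      have : l ≤ 2*M + 2 := by omega
      have hc : (l:ℝ) ≤ 2*(M:ℝ) + 2 := by exact_mod_cast this
      linarith
    have h3 : Real.log ((l:ℝ)/2) ≤ Real.log ((M:ℝ)+1) :=
      Real.log_le_log (by positivity) h2
    have h4 : Real.log ((l:ℝ)/2) = Real.log l - Real.log 2 :=
      Real.log_div (by positivity) (by norm_num)
    have h5 : Real.log 16 ≤ Real.log l :=
      Real.log_le_log (by norm_num) (by exact_mod_cast hl)
    have h6 : Real.log (16:ℝ) = 4 * Real.log 2 := by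
      have : (16:ℝ) = 2^4 := by norm_num
      rw [this, Real.log_pow]
      push_cast
      ring
    have hlog2 : (0:ℝ) ≤ Real.log 2 := Real.log_nonneg (by norm_num)
    linarith
  -- Combine
  calc (3:ℝ)/16 * Real.log l / (l:ℝ)^2
      = (3:ℝ)/8 * (1/(l:ℝ)^2) * ((1:ℝ)/2 * Real.log l) := by ring
    _ ≤ (3:ℝ)/8 * (1/(l:ℝ)^2) * (∑ m ∈ Finset.Icc 2 M, (1:ℝ)/m) := by
        apply mul_le_mul_of_nonneg_left stepE (by positivity)
    _ = ∑ m ∈ Finset.Icc 2 M, (3:ℝ)/8 * (1/(m:ℝ)) * (1/(l:ℝ)^2) := by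
        rw [Finset.mul_sum]
        apply Finset.sum_congr rfl
        intro m _
        ring
    _ ≤ ∑ m ∈ Finset.Icc 2 M, ((m - 1 : ℕ) : ℝ) * ((3:ℝ)/4 * (1/((m:ℝ)^2 * (l:ℝ)^2))) :=
        Finset.sum_le_sum stepD
    _ = ∑ y ∈ T, (3:ℝ)/4 * (1/((y.1:ℝ)^2 * (l:ℝ)^2)) := stepC.symm
    _ ≤ ∑ y ∈ T, F (e y) := Finset.sum_le_sum stepB
    _ ≤ Stilde l := stepA

/-- There exist `c₂ > c₁ > 0` such that for all large `ℓ`,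
`c₁ log ℓ / ℓ² ≤ S̃_ℓ ≤ c₂ log ℓ / ℓ²`. -/
theorem stmt_15 :
    ∃ c₁ c₂ : ℝ, 0 < c₁ ∧ c₁ < c₂ ∧ ∃ N : ℕ, ∀ l : ℕ, N ≤ l →
      c₁ * Real.log l / (l : ℝ) ^ 2 ≤ Stilde l
      ∧ Stilde l ≤ c₂ * Real.log l / (l : ℝ) ^ 2 := by
  refine ⟨3/16, 27, by norm_num, by norm_num, 16, fun l hl => ?_⟩
  exact ⟨Stilde_lower l hl, Stilde_upper l (by omega)⟩
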